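/- arXiv:2104.08674 — 2 statements merged into one kernel-verified Lean document; each statement's English description precedes it below -/
import Mathlib

section
/- Let F be an algebraically closed field of characteristic p > 0, n ≥ 1, and let g ∈ GL_n(F) be a nontrivial element, acting on the Weyl algebra A_n(F) by the symplectic linear action and hence on Frac(A_n(F)). Then the induced automorphism of Frac(A_n(F)) is outer: there is no nonzero q ∈ Frac(A_n(F)) such that g·a = q a q^{-1} for all a ∈ Frac(A_n(F)). -/
set_option synthInstance.maxHeartbeats 1000000
set_option maxHeartbeats 4000000

open scoped nonZeroDivisors
open Matrix

/-- The defining relations of the `n`-th Weyl algebra, on generators indexed by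
`Fin n ⊕ Fin n` (`Sum.inl i ↦ xᵢ`, `Sum.inr i ↦ yᵢ`):
`xᵢxⱼ = xⱼxᵢ`, `yᵢyⱼ = yⱼyᵢ`, `yᵢxⱼ = xⱼyᵢ + δᵢⱼ`. -/
inductive WeylRel (R : Type*) [CommRing R] (n : ℕ) :
    FreeAlgebra R (Fin n ⊕ Fin n) → FreeAlgebra R (Fin n ⊕ Fin n) → Prop
  | xx (i j : Fin n) : WeylRel R n
      (FreeAlgebra.ι R (Sum.inl i) * FreeAlgebra.ι R (Sum.inl j))
      (FreeAlgebra.ι R (Sum.inl j) * FreeAlgebra.ι R (Sum.inl i))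
  | yy (i j : Fin n) : WeylRel R n
      (FreeAlgebra.ι R (Sum.inr i) * FreeAlgebra.ι R (Sum.inr j))
      (FreeAlgebra.ι R (Sum.inr j) * FreeAlgebra.ι R (Sum.inr i))
  | yx (i j : Fin n) : WeylRel R n
      (FreeAlgebra.ι R (Sum.inr i) * FreeAlgebra.ι R (Sum.inl j))
      (FreeAlgebra.ι R (Sum.inl j) * FreeAlgebra.ι R (Sum.inr i)
        + if i = j then 1 else 0)

/-- The `n`-th Weyl algebra `A_n(R)`. -/
abbrev WeylAlgebra (R : Type*) [CommRing R] (n : ℕ) : Type _ := RingQuot (WeylRel R n)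

/-- The generator `xᵢ` of the Weyl algebra. -/
noncomputable def wX (R : Type*) [CommRing R] (n : ℕ) (i : Fin n) : WeylAlgebra R n :=
  RingQuot.mkAlgHom R (WeylRel R n) (FreeAlgebra.ι R (Sum.inl i))

/-- The generator `yᵢ` of the Weyl algebra. -/
noncomputable def wY (R : Type*) [CommRing R] (n : ℕ) (i : Fin n) : WeylAlgebra R n :=
  RingQuot.mkAlgHom R (WeylRel R n) (FreeAlgebra.ι R (Sum.inr i))

/-- The skew field of fractions `Frac(A_n(F))` of the Weyl algebra, realized as the Ore
localization of `A_n(F)` at the Ore set of its nonzero elements (it is a division ring,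
given that `A_n(F)` is a noetherian domain). -/
abbrev WeylFrac (F : Type*) [Field F] (n : ℕ)
    [OreLocalization.OreSet (WeylAlgebra F n)⁰] : Type _ :=
  OreLocalization (WeylAlgebra F n)⁰ (WeylAlgebra F n)

/-- The canonical inclusion of the Weyl algebra into its skew field of fractions. -/
noncomputable def weylToFrac (F : Type*) [Field F] (n : ℕ)
    [OreLocalization.OreSet (WeylAlgebra F n)⁰] :
    WeylAlgebra F n →+* WeylFrac F n :=
  OreLocalization.numeratorRingHom

section Fixed
variable {G : Type*} [Group G]

/-- The fixed subalgebra (`Q^G`) of an action of `G` by `F`-algebra automorphisms. -/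
def fixedSubalgebra (F : Type*) {Q : Type*} [CommSemiring F] [Semiring Q] [Algebra F Q]
    (ρ : G →* (Q ≃ₐ[F] Q)) : Subalgebra F Q where
  carrier := {a | ∀ g, ρ g a = a}
  algebraMap_mem' := fun r g => (ρ g).commutes r
  add_mem' := fun ha hb g => by rw [_root_.map_add, ha g, hb g]
  mul_mem' := fun ha hb g => by rw [_root_.map_mul, ha g, hb g]

/-- The fixed sub-division-ring (`Q^G`) of an action of `G` by `F`-algebra automorphisms
of a division ring, as a `Subfield` in Mathlib's sense (a sub-division-ring). -/
def fixedSubfield (F : Type*) {Q : Type*} [CommSemiring F] [DivisionRing Q] [Algebra F Q]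
    (ρ : G →* (Q ≃ₐ[F] Q)) : Subfield Q where
  carrier := {a | ∀ g, ρ g a = a}
  one_mem' := fun g => map_one _
  zero_mem' := fun g => map_zero _
  add_mem' := fun ha hb g => by rw [_root_.map_add, ha g, hb g]
  mul_mem' := fun ha hb g => by rw [_root_.map_mul, ha g, hb g]
  neg_mem' := fun ha g => by rw [map_neg, ha g]
  inv_mem' := fun a ha g => by rw [map_inv₀, ha g]

end Fixed

/-- A field extension `K/F` is *stably rational over `F`* if some rational function field
`K(t₁,…,t_m)` over `K` is isomorphic, as an `F`-algebra, to a rational function field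
`F(z₁,…,z_N)` over `F` in finitely many variables. -/
def IsStablyRational (F K : Type*) [Field F] [Field K] [Algebra F K] : Prop :=
  ∃ m N : ℕ, Nonempty
    (FractionRing (MvPolynomial (Fin m) K) ≃ₐ[F] FractionRing (MvPolynomial (Fin N) F))

section Actions

variable {F : Type*} [Field F] {n : ℕ}

/-- `ρ` is the symplectic action of the subgroup `G ≤ GLₙ(F)` on `Frac(A_n(F))`:
`g` maps `xⱼ` to `∑ᵢ gᵢⱼ xᵢ` and `yⱼ` to `∑ᵢ ((gᵀ)⁻¹)ᵢⱼ yᵢ = ∑ᵢ (g⁻¹)ⱼᵢ yᵢ`.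
(Such an action exists and is unique, since the extension of the linear action from
`A_n(F)` to its skew field of fractions is unique.) -/
def IsWeylFracAction [OreLocalization.OreSet (WeylAlgebra F n)⁰]
    (G : Subgroup (GL (Fin n) F)) (ρ : G →* (WeylFrac F n ≃ₐ[F] WeylFrac F n)) : Prop :=
  ∀ g : G,
    (∀ j, ρ g (weylToFrac F n (wX F n j)) =
      ∑ i, ((g : GL (Fin n) F) : Matrix (Fin n) (Fin n) F) i j • weylToFrac F n (wX F n i)) ∧
    (∀ j, ρ g (weylToFrac F n (wY F n j)) =
      ∑ i, (((g : GL (Fin n) F)⁻¹ : GL (Fin n) F) : Matrix (Fin n) (Fin n) F) j i •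
        weylToFrac F n (wY F n i))

/-- `ρ` is the symplectic action of a subgroup `G ≤ GLₙ(ℤ)` on `Frac(A_n(F))`, acting
through the (entrywise) reduction map `GLₙ(ℤ) → GLₙ(F)`. -/
def IsWeylFracActionInt [OreLocalization.OreSet (WeylAlgebra F n)⁰]
    (G : Subgroup (GL (Fin n) ℤ)) (ρ : G →* (WeylFrac F n ≃ₐ[F] WeylFrac F n)) : Prop :=
  ∀ g : G,
    (∀ j, ρ g (weylToFrac F n (wX F n j)) =
      ∑ i, (((g : GL (Fin n) ℤ) : Matrix (Fin n) (Fin n) ℤ) i j : F) •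
        weylToFrac F n (wX F n i)) ∧
    (∀ j, ρ g (weylToFrac F n (wY F n j)) =
      ∑ i, ((((g : GL (Fin n) ℤ)⁻¹ : GL (Fin n) ℤ) : Matrix (Fin n) (Fin n) ℤ) j i : F) •
        weylToFrac F n (wY F n i))

/-- `ρ` is the linear action of the subgroup `G ≤ GLₙ(F)` on the rational function field
`F(x₁,…,xₙ)`: `g` maps `xⱼ` to `∑ᵢ gᵢⱼ xᵢ`. -/
def IsMvRatAction (G : Subgroup (GL (Fin n) F))
    (ρ : G →* (FractionRing (MvPolynomial (Fin n) F) ≃ₐ[F]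
      FractionRing (MvPolynomial (Fin n) F))) : Prop :=
  ∀ g : G, ∀ j,
    ρ g (algebraMap (MvPolynomial (Fin n) F) (FractionRing (MvPolynomial (Fin n) F))
        (MvPolynomial.X j)) =
      ∑ i, ((g : GL (Fin n) F) : Matrix (Fin n) (Fin n) F) i j •
        algebraMap (MvPolynomial (Fin n) F) (FractionRing (MvPolynomial (Fin n) F))
          (MvPolynomial.X i)

/-- `ρ` is the linear action of a subgroup `G ≤ GLₙ(ℤ)` on the rational function field
`F(x₁,…,xₙ)`, acting through the (entrywise) reduction map `GLₙ(ℤ) → GLₙ(F)`. -/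
def IsMvRatActionInt (G : Subgroup (GL (Fin n) ℤ))
    (ρ : G →* (FractionRing (MvPolynomial (Fin n) F) ≃ₐ[F]
      FractionRing (MvPolynomial (Fin n) F))) : Prop :=
  ∀ g : G, ∀ j,
    ρ g (algebraMap (MvPolynomial (Fin n) F) (FractionRing (MvPolynomial (Fin n) F))
        (MvPolynomial.X j)) =
      ∑ i, (((g : GL (Fin n) ℤ) : Matrix (Fin n) (Fin n) ℤ) i j : F) •
        algebraMap (MvPolynomial (Fin n) F) (FractionRing (MvPolynomial (Fin n) F))
          (MvPolynomial.X i)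

end Actions

section Aux

lemma pderiv_comm' {F : Type*} [CommRing F] {n : ℕ} (i j : Fin n) (f : MvPolynomial (Fin n) F) :
    MvPolynomial.pderiv i (MvPolynomial.pderiv j f) =
      MvPolynomial.pderiv j (MvPolynomial.pderiv i f) := by
  classical
  induction f using MvPolynomial.induction_on with
  | C => simp
  | add f g hf hg => simp [hf, hg]
  | mul_X f k hf =>
    simp only [MvPolynomial.pderiv_mul, map_add, MvPolynomial.pderiv_X, hf, Pi.single_apply]
    split_ifs <;> simp [hf] <;> ring

variable (F : Type*) [Field F] (n : ℕ)

/-- Images of the generators in the polynomial representation. -/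
noncomputable def weylGen : Fin n ⊕ Fin n → Module.End F (MvPolynomial (Fin n) F)
  | Sum.inl i => LinearMap.mulLeft F (MvPolynomial.X i)
  | Sum.inr i => (MvPolynomial.pderiv i).toLinearMap

/-- The polynomial representation of the Weyl algebra. -/
noncomputable def weylRep : WeylAlgebra F n →ₐ[F] Module.End F (MvPolynomial (Fin n) F) :=
  RingQuot.liftAlgHom F ⟨FreeAlgebra.lift F (weylGen F n), by
    rintro a b (⟨i, j⟩ | ⟨i, j⟩ | ⟨i, j⟩) <;>
        simp only [_root_.map_mul, _root_.map_add, FreeAlgebra.lift_ι_apply, weylGen] <;>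
        refine LinearMap.ext fun q => ?_ <;>
        simp only [Module.End.mul_apply, LinearMap.mulLeft_apply, Derivation.coeFn_coe,
          LinearMap.add_apply]
    · ring
    · exact pderiv_comm' i j q
    · classical
      rw [MvPolynomial.pderiv_mul]
      by_cases h : i = j <;>
        simp [h, MvPolynomial.pderiv_X, Pi.single_apply, add_comm]⟩

theorem weylRep_wX (i : Fin n) :
    weylRep F n (wX F n i) = LinearMap.mulLeft F (MvPolynomial.X i) := by
  rw [wX, weylRep, RingQuot.liftAlgHom_mkAlgHom_apply, FreeAlgebra.lift_ι_apply]; rfl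

theorem weylRep_wY (i : Fin n) :
    weylRep F n (wY F n i) = (MvPolynomial.pderiv i).toLinearMap := by
  rw [wY, weylRep, RingQuot.liftAlgHom_mkAlgHom_apply, FreeAlgebra.lift_ι_apply]; rfl

theorem wX_commute (i j : Fin n) : Commute (wX F n i) (wX F n j) := by
  have := RingQuot.mkAlgHom_rel F (WeylRel.xx (R := F) i j)
  simpa only [_root_.map_mul, wX, Commute, SemiconjBy] using this

theorem wY_wX (i j : Fin n) :
    wY F n i * wX F n j = wX F n j * wY F n i + if i = j then 1 else 0 := by
  have := RingQuot.mkAlgHom_rel F (WeylRel.yx (R := F) i j)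
  simp only [_root_.map_mul, _root_.map_add, apply_ite (RingQuot.mkAlgHom F (WeylRel F n)),
    _root_.map_one, map_zero] at this
  simpa only [wX, wY] using this

theorem wY_wX_pow (i j : Fin n) (m : ℕ) :
    wY F n i * wX F n j ^ (m + 1) =
      wX F n j ^ (m + 1) * wY F n i +
        ((m + 1 : ℕ) : WeylAlgebra F n) * (if i = j then wX F n j ^ m else 0) := by
  induction m with
  | zero =>
    simp only [zero_add, pow_one, pow_zero, Nat.cast_one, one_mul]
    exact wY_wX F n i j
  | succ m ih =>
    have hEx : (if i = j then wX F n j ^ m else 0) * wX F n j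
        = (if i = j then wX F n j ^ (m+1) else 0) := by
      split_ifs <;> simp [pow_succ]
    have hIte : wX F n j ^ (m+1) * (if i = j then (1 : WeylAlgebra F n) else 0)
        = (if i = j then wX F n j ^ (m+1) else 0) := by
      split_ifs <;> simp
    calc wY F n i * wX F n j ^ (m + 1 + 1)
        = (wY F n i * wX F n j ^ (m + 1)) * wX F n j := by rw [pow_succ, ← mul_assoc]
      _ = wX F n j ^ (m+1) * (wY F n i * wX F n j)
            + ((m+1 : ℕ) : WeylAlgebra F n) * ((if i = j then wX F n j ^ m else 0) * wX F n j) := by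
          rw [ih, add_mul, mul_assoc, mul_assoc]
      _ = wX F n j ^ (m+1) * (wX F n j * wY F n i + if i = j then 1 else 0)
            + ((m+1 : ℕ) : WeylAlgebra F n) * (if i = j then wX F n j ^ (m+1) else 0) := by
          rw [wY_wX, hEx]
      _ = wX F n j ^ (m+1+1) * wY F n i
            + ((if i = j then wX F n j ^ (m+1) else 0)
            + ((m+1 : ℕ) : WeylAlgebra F n) * (if i = j then wX F n j ^ (m+1) else 0)) := by
          rw [mul_add, ← mul_assoc, ← pow_succ, hIte, add_assoc]
      _ = wX F n j ^ (m+1+1) * wY F n i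
            + ((m+1+1 : ℕ) : WeylAlgebra F n) * (if i = j then wX F n j ^ (m+1) else 0) := by
          conv_rhs => rw [Nat.cast_succ, add_mul, one_mul]
          rw [add_comm (((m+1 : ℕ) : WeylAlgebra F n) * _)]

theorem weylAlgebra_natCast_char (p : ℕ) [CharP F p] :
    ((p : ℕ) : WeylAlgebra F n) = 0 := by
  have : ((p : ℕ) : WeylAlgebra F n) = algebraMap F (WeylAlgebra F n) ((p : ℕ) : F) := by
    rw [map_natCast]
  rw [this, CharP.cast_eq_zero F p, map_zero]

theorem wX_pow_central (p : ℕ) [CharP F p] (hp : 0 < p) (j : Fin n) (a : WeylAlgebra F n) :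
    Commute a (wX F n j ^ p) := by
  obtain ⟨b, rfl⟩ := RingQuot.mkAlgHom_surjective F (WeylRel F n) a
  induction b using FreeAlgebra.induction with
  | grade0 r =>
    rw [AlgHom.commutes]
    exact Algebra.commutes r _
  | grade1 x =>
    rcases x with i | i
    · exact (wX_commute F n i j).pow_right p
    · show Commute (wY F n i) _
      have h := wY_wX_pow F n i j (p - 1)
      rw [Nat.sub_add_cancel hp, weylAlgebra_natCast_char F n p, zero_mul, add_zero] at h
      exact h
  | mul a b ha hb => rw [_root_.map_mul]; exact ha.mul_left hb
  | add a b ha hb => rw [_root_.map_add]; exact ha.add_left hb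

theorem weylToFrac_apply [OreLocalization.OreSet (WeylAlgebra F n)⁰] (a : WeylAlgebra F n) :
    weylToFrac F n a = a /ₒ (1 : (WeylAlgebra F n)⁰) := rfl

theorem weylToFrac_central (p : ℕ) [CharP F p] (hp : 0 < p)
    [OreLocalization.OreSet (WeylAlgebra F n)⁰] (j : Fin n) (u : WeylFrac F n) :
    Commute u (weylToFrac F n (wX F n j ^ p)) := by
  induction u using OreLocalization.ind with
  | _ r s =>
    show _ * _ = _ * _
    rw [weylToFrac_apply, OreLocalization.mul_div_one,
      OreLocalization.oreDiv_mul_char (wX F n j ^ p) r 1 s (wX F n j ^ p) s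
        (wX_pow_central F n p hp j (s : WeylAlgebra F n)).eq,
      mul_one, (wX_pow_central F n p hp j r).eq]

theorem weylToFrac_injective [OreLocalization.OreSet (WeylAlgebra F n)⁰]
    [Nontrivial (WeylAlgebra F n)] [NoZeroDivisors (WeylAlgebra F n)] :
    Function.Injective (weylToFrac F n) := by
  have hS : (WeylAlgebra F n)⁰ ≤ nonZeroDivisorsLeft (WeylAlgebra F n) := by
    intro x hx
    rw [mem_nonZeroDivisorsLeft_iff]
    intro y hxy
    rcases mul_eq_zero.mp hxy with h | h
    · exact absurd h (nonZeroDivisors.ne_zero hx)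
    · exact h
  exact OreLocalization.numeratorHom_inj hS

theorem weylToFrac_smul [OreLocalization.OreSet (WeylAlgebra F n)⁰]
    (c : F) (a : WeylAlgebra F n) :
    c • weylToFrac F n a = weylToFrac F n (c • a) := by
  rw [weylToFrac_apply, weylToFrac_apply, OreLocalization.smul_oreDiv_one]

theorem sum_pow_char_of_commute {A : Type*} [Ring A] (p : ℕ) [hF : Fact p.Prime] [CharP A p]
    {ι : Type*} (s : Finset ι) (f : ι → A)
    (h : ∀ i ∈ s, ∀ j ∈ s, Commute (f i) (f j)) :
    (∑ i ∈ s, f i) ^ p = ∑ i ∈ s, f i ^ p := by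
  classical
  induction s using Finset.induction_on with
  | empty => simp [zero_pow hF.out.ne_zero]
  | @insert a s ha ih =>
    rw [Finset.sum_insert ha, Finset.sum_insert ha,
      add_pow_expChar_of_commute _ (Commute.sum_right _ _ _ fun j hj =>
        h a (Finset.mem_insert_self a s) j (Finset.mem_insert_of_mem hj)),
      ih fun i hi j hj => h i (Finset.mem_insert_of_mem hi) j (Finset.mem_insert_of_mem hj)]


end Aux


/-- Every nontrivial element `g ∈ GLₙ(F)` (`F` algebraically closed of characteristic `p > 0`)
acts on `Frac(A_n(F))`, via the symplectic extension of its linear action on the Weyl algebra,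
by an *outer* automorphism: there is no nonzero `q ∈ Frac(A_n(F))` with
`g · a = q a q⁻¹` for all `a`. -/
theorem weylFrac_automorphism_outer
    (p n : ℕ) (hn : 1 ≤ n) (F : Type*) [Field F] [IsAlgClosed F] [CharP F p] (hp : 0 < p)
    [OreLocalization.OreSet (WeylAlgebra F n)⁰]
    [Nontrivial (WeylAlgebra F n)] [NoZeroDivisors (WeylAlgebra F n)]
    (g : GL (Fin n) F) (hg : g ≠ 1)
    (σ : WeylFrac F n ≃ₐ[F] WeylFrac F n)
    (hσx : ∀ j, σ (weylToFrac F n (wX F n j)) =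
      ∑ i, (g : Matrix (Fin n) (Fin n) F) i j • weylToFrac F n (wX F n i))
    (hσy : ∀ j, σ (weylToFrac F n (wY F n j)) =
      ∑ i, ((g⁻¹ : GL (Fin n) F) : Matrix (Fin n) (Fin n) F) j i • weylToFrac F n (wY F n i)) :
    ¬ ∃ q : WeylFrac F n, q ≠ 0 ∧ ∀ a : WeylFrac F n, σ a = q * a * q⁻¹ := by
  rintro ⟨q, hq, hconj⟩
  haveI : Fact p.Prime := ⟨(CharP.char_is_prime_or_zero F p).resolve_right (by omega)⟩
  classical
  have halg : Function.Injective (algebraMap F (WeylFrac F n)) := RingHom.injective _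
  haveI : CharP (WeylFrac F n) p := charP_of_injective_algebraMap halg p
  have key : ∀ j k : Fin n, (g : Matrix (Fin n) (Fin n) F) k j ^ p
      = if k = j then 1 else 0 := by
    intro j k
    have hzc : ∀ u : WeylFrac F n, Commute u (weylToFrac F n (wX F n j ^ p)) :=
      weylToFrac_central F n p hp j
    have hfix : σ (weylToFrac F n (wX F n j ^ p)) = weylToFrac F n (wX F n j ^ p) := by
      rw [hconj, (hzc q).eq, mul_assoc, mul_inv_cancel₀ (G₀ := WeylFrac F n) hq, mul_one]
    have hcomm : ∀ i ∈ Finset.univ, ∀ k ∈ (Finset.univ : Finset (Fin n)),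
        Commute ((g : Matrix (Fin n) (Fin n) F) i j • weylToFrac F n (wX F n i))
          ((g : Matrix (Fin n) (Fin n) F) k j • weylToFrac F n (wX F n k)) := by
      intro i _ k _
      exact (((wX_commute F n i k).map (weylToFrac F n)).smul_right _).smul_left _
    have hstep : σ (weylToFrac F n (wX F n j ^ p))
        = weylToFrac F n (∑ i, (g : Matrix (Fin n) (Fin n) F) i j ^ p • wX F n i ^ p) := by
      rw [map_pow, map_pow, hσx j, sum_pow_char_of_commute (A := WeylFrac F n) p Finset.univ _ hcomm, map_sum]
      refine Finset.sum_congr rfl fun i _ => ?_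
      rw [smul_pow, ← map_pow, weylToFrac_smul]
    have hA : (∑ i, (g : Matrix (Fin n) (Fin n) F) i j ^ p • wX F n i ^ p) = wX F n j ^ p :=
      weylToFrac_injective F n (by rw [← hstep, hfix])
    have hP := congrArg (fun z => (weylRep F n z) (1 : MvPolynomial (Fin n) F)) hA
    simp only [map_sum, _root_.map_smul, map_pow, weylRep_wX, LinearMap.pow_mulLeft,
      LinearMap.sum_apply, LinearMap.smul_apply, LinearMap.mulLeft_apply, mul_one] at hP
    have hcoeff := congrArg (MvPolynomial.coeff (Finsupp.single k p)) hP
    simp only [MvPolynomial.coeff_sum, MvPolynomial.coeff_smul, MvPolynomial.coeff_X_pow,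
      smul_eq_mul, mul_ite, mul_one, mul_zero, Finsupp.single_left_inj hp.ne',
      Finset.sum_ite_eq', Finset.mem_univ, if_true] at hcoeff
    rw [hcoeff]
    simp [eq_comm]
  have hg1 : (g : Matrix (Fin n) (Fin n) F) = 1 := by
    ext k j
    have h2 : ((1 : Matrix (Fin n) (Fin n) F) k j) ^ p = if k = j then 1 else 0 := by
      rw [Matrix.one_apply]
      split_ifs <;> simp [zero_pow hp.ne']
    exact frobenius_inj F p (by rw [frobenius_def, frobenius_def, key j k, h2])
  exact hg (Units.ext (by rw [hg1, Units.val_one]))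
end

section
/- Let Q be a division ring and let G be a finite group acting on Q by ring automorphisms such that every non-identity element of G acts by a non-inner automorphism (i.e., for g ≠ 1 there is no nonzero q ∈ Q with g·a = q a q^{-1} for all a ∈ Q). Then the center of the division subring of invariants equals the G-invariants of the center: Z(Q^G) = Z(Q) ∩ Q^G. -/
/-- The fixed subring `Q^G` of an action `ρ` of a group `G` on a ring `Q` by ring
automorphisms. -/
def fixedSubringOfAut {G : Type*} [Group G] {Q : Type*} [Ring Q] (ρ : G →* RingAut Q) :
    Subring Q where
  carrier := {a | ∀ g, ρ g a = a}
  zero_mem' := fun g => map_zero _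
  one_mem' := fun g => map_one _
  add_mem' := fun ha hb g => by rw [map_add, ha g, hb g]
  neg_mem' := fun ha g => by rw [map_neg, ha g]
  mul_mem' := fun ha hb g => by rw [map_mul, ha g, hb g]

section AuxCenterFixed

variable {Q : Type*} [DivisionRing Q]

def bmap (M : List (Q × Q)) (y : Q) : Q := (M.map fun p => p.1 * y * p.2).sum

@[simp] lemma bmap_nil (y : Q) : bmap ([] : List (Q × Q)) y = 0 := rfl

@[simp] lemma bmap_cons (p : Q × Q) (M : List (Q × Q)) (y : Q) :
    bmap (p :: M) y = p.1 * y * p.2 + bmap M y := by simp [bmap]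

lemma bmap_elim_left (M : List (Q × Q)) (u s y : Q) :
    bmap (M.map fun p => (p.1 * u - s * p.1, p.2)) y = bmap M (u * y) - s * bmap M y := by
  induction M with
  | nil => simp
  | cons p M ih => simp only [List.map_cons, bmap_cons, ih]; noncomm_ring

lemma bmap_elim_right (M : List (Q × Q)) (u t y : Q) :
    bmap (M.map fun p => (p.1, u * p.2 - p.2 * t)) y = bmap M (y * u) - bmap M y * t := by
  induction M with
  | nil => simp
  | cons p M ih => simp only [List.map_cons, bmap_cons, ih]; noncomm_ring

lemma bmap_conj (M : List (Q × Q)) (s t y : Q) :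
    bmap (M.map fun p => (s * p.1, p.2 * t)) y = s * bmap M y * t := by
  induction M with
  | nil => simp
  | cons p M ih => simp only [List.map_cons, bmap_cons, ih]; noncomm_ring

lemma bmap_twist (M : List (Q × Q)) (m z y : Q) :
    bmap (M.map fun p => (p.1, p.2 * m - z * p.2)) y = bmap M y * m - bmap M (y * z) := by
  induction M with
  | nil => simp
  | cons p M ih => simp only [List.map_cons, bmap_cons, ih]; noncomm_ring

lemma bmap_add_mul (M : List (Q × Q)) (f : Q × Q → Q) (v y : Q) :
    bmap (M.map fun p => (p.1, p.2 + f p * v)) y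
      = bmap M y + bmap (M.map fun p => (p.1, f p)) y * v := by
  induction M with
  | nil => simp
  | cons p M ih => simp only [List.map_cons, bmap_cons, ih]; noncomm_ring

lemma inner_of_bmap_eq (μ : Q ≃+* Q) :
    ∀ (n : ℕ) (M : List (Q × Q)), M.length ≤ n → (∀ y, μ y = bmap M y) →
      ∃ m : Q, m ≠ 0 ∧ ∀ v, μ v = m * v * m⁻¹ := by
  intro n
  induction n with
  | zero =>
    intro M hM h
    rw [List.length_eq_zero_iff.mp (Nat.le_zero.mp hM)] at h
    have := h 1
    rw [map_one, bmap_nil] at this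
    exact absurd this one_ne_zero
  | succ n ih =>
    intro M hM h
    match M with
    | [] =>
      have := h 1
      rw [map_one, bmap_nil] at this
      exact absurd this one_ne_zero
    | (c, d) :: M' =>
      simp only [List.length_cons, Nat.succ_le_succ_iff] at hM
      by_cases hc : c = 0
      · exact ih M' hM (fun y => by simpa [hc] using h y)
      by_cases hd : d = 0
      · exact ih M' hM (fun y => by simpa [hd] using h y)
      by_cases hin : ∀ z, z * d = d * μ z
      · refine ⟨d⁻¹, inv_ne_zero hd, fun v => ?_⟩
        rw [inv_inv]
        rw [mul_assoc, hin v, ← mul_assoc, inv_mul_cancel₀ hd, one_mul]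
      · push_neg at hin
        obtain ⟨z, hz⟩ := hin
        have hw0 : z * d - d * μ z ≠ 0 := sub_ne_zero.mpr hz
        have hkey : ∀ y, c * y * (z * d - d * μ z)
            = bmap (M'.map fun p => (p.1, p.2 * μ z - z * p.2)) y := by
          intro y
          rw [bmap_twist]
          have hmain : c * (y * z) * d + bmap M' (y * z)
              = (c * y * d + bmap M' y) * μ z := by
            have h1 := h (y * z)
            rw [bmap_cons] at h1
            rw [← h1, map_mul, h y, bmap_cons]
          have hid : c * y * (z * d - d * μ z) - (bmap M' y * μ z - bmap M' (y * z))
              = (c * (y * z) * d + bmap M' (y * z)) - (c * y * d + bmap M' y) * μ z := by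
            noncomm_ring
          rw [← sub_eq_zero, hid, sub_eq_zero]
          exact hmain
        set w := z * d - d * μ z with hwdef
        have hM'' : ∀ y, μ y = bmap (M'.map fun p =>
            (p.1, p.2 + (p.2 * μ z - z * p.2) * (w⁻¹ * d))) y := by
          intro y
          rw [bmap_add_mul M' (fun p => p.2 * μ z - z * p.2) (w⁻¹ * d) y, ← hkey y,
            mul_assoc (c * y) w, ← mul_assoc w, mul_inv_cancel₀ hw0, one_mul,
            h y, bmap_cons]
          noncomm_ring
        exact ih _ (by simpa using hM) hM''
def NotInn (σ τ : Q ≃+* Q) : Prop := ¬ ∃ m : Q, m ≠ 0 ∧ ∀ a : Q, σ a = m * τ a * m⁻¹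

def relmap (L : List ((Q ≃+* Q) × List (Q × Q))) (a : Q) : Q :=
  (L.map fun q => bmap q.2 (q.1 a)).sum

@[simp] lemma relmap_nil (a : Q) : relmap ([] : List ((Q ≃+* Q) × List (Q × Q))) a = 0 := rfl

@[simp] lemma relmap_cons (q : (Q ≃+* Q) × List (Q × Q)) (L : List ((Q ≃+* Q) × List (Q × Q)))
    (a : Q) : relmap (q :: L) a = bmap q.2 (q.1 a) + relmap L a := by simp [relmap]

lemma relmap_elim_left (L : List ((Q ≃+* Q) × List (Q × Q))) (u s a : Q) :
    relmap (L.map fun q => (q.1, q.2.map fun p => (p.1 * q.1 u - s * p.1, p.2))) a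
      = relmap L (u * a) - s * relmap L a := by
  induction L with
  | nil => simp
  | cons q L ih =>
    simp only [List.map_cons, relmap_cons, ih, bmap_elim_left, map_mul]
    noncomm_ring

lemma relmap_elim_right (L : List ((Q ≃+* Q) × List (Q × Q))) (u t a : Q) :
    relmap (L.map fun q => (q.1, q.2.map fun p => (p.1, q.1 u * p.2 - p.2 * t))) a
      = relmap L (a * u) - relmap L a * t := by
  induction L with
  | nil => simp
  | cons q L ih =>
    simp only [List.map_cons, relmap_cons, ih, bmap_elim_right, map_mul]
    noncomm_ring

lemma map_fst_map (L : List ((Q ≃+* Q) × List (Q × Q))) (f : ((Q ≃+* Q) × List (Q × Q)) → List (Q × Q)) :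
    ((L.map fun q => (q.1, f q)).map Prod.fst) = L.map Prod.fst := by
  simp [List.map_map, Function.comp]

lemma indep_main : ∀ (n : ℕ) (L : List ((Q ≃+* Q) × List (Q × Q))), L.length ≤ n →
    (L.map Prod.fst).Pairwise NotInn → (∀ a, relmap L a = 0) →
    ∀ q ∈ L, ∀ y, bmap q.2 y = 0 := by
  intro n
  induction n with
  | zero =>
    intro L hL _ _ q hq
    rw [List.length_eq_zero_iff.mp (Nat.le_zero.mp hL)] at hq
    simp at hq
  | succ n ihA =>
    have key : ∀ (k : ℕ) (M : List (Q × Q)) (τ1 : Q ≃+* Q)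
        (L' : List ((Q ≃+* Q) × List (Q × Q))),
        M.length ≤ k → L'.length ≤ n →
        (((τ1, M) :: L').map Prod.fst).Pairwise NotInn →
        (∀ a, relmap ((τ1, M) :: L') a = 0) →
        ∀ q ∈ (τ1, M) :: L', ∀ y, bmap q.2 y = 0 := by
      intro k
      induction k with
      | zero =>
        intro M τ1 L' hM hL' hP hrel q hq
        have hMnil : M = [] := List.length_eq_zero_iff.mp (Nat.le_zero.mp hM)
        subst hMnil
        have hrel' : ∀ a, relmap L' a = 0 := fun a => by simpa using hrel a
        have hP' : (L'.map Prod.fst).Pairwise NotInn :=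
          (List.pairwise_cons.mp (by simpa using hP)).2
        rcases List.mem_cons.mp hq with rfl | hq
        · intro y; simp
        · exact ihA L' hL' hP' hrel' q hq
      | succ k ihk =>
        intro M τ1 L' hM hL' hP hrel
        match M with
        | [] => exact ihk [] τ1 L' (by simp) hL' hP hrel
        | (c, d) :: M' =>
          simp only [List.length_cons, Nat.succ_le_succ_iff] at hM
          by_cases hc : c = 0
          · have hrel' : ∀ a, relmap ((τ1, M') :: L') a = 0 := fun a => by
              simpa [hc] using hrel a
            have hres := ihk M' τ1 L' hM hL' (by simpa using hP) hrel'
            intro q hq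
            rcases List.mem_cons.mp hq with rfl | hq
            · intro y
              rw [bmap_cons]
              simp [hc, hres (τ1, M') List.mem_cons_self y]
            · exact hres q (List.mem_cons_of_mem _ hq)
          by_cases hd : d = 0
          · have hrel' : ∀ a, relmap ((τ1, M') :: L') a = 0 := fun a => by
              simpa [hd] using hrel a
            have hres := ihk M' τ1 L' hM hL' (by simpa using hP) hrel'
            intro q hq
            rcases List.mem_cons.mp hq with rfl | hq
            · intro y
              rw [bmap_cons]
              simp [hd, hres (τ1, M') List.mem_cons_self y]
            · exact hres q (List.mem_cons_of_mem _ hq)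
          -- main case
          have hLe : ∀ u : Q, ∀ τN ∈ L', ∀ y : Q,
              bmap τN.2 (τN.1 u * y) = (c * τ1 u * c⁻¹) * bmap τN.2 y := by
            intro u τN hτN y
            have h0 : ∀ a, relmap ((((τ1, (c, d) :: M') :: L')).map fun q =>
                (q.1, q.2.map fun p => (p.1 * q.1 u - (c * τ1 u * c⁻¹) * p.1, p.2))) a = 0 := by
              intro a; rw [relmap_elim_left]; simp [hrel]
            have hzero : c * τ1 u - (c * τ1 u * c⁻¹) * c = 0 := by
              rw [mul_assoc (c * τ1 u), inv_mul_cancel₀ hc, mul_one, sub_self]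
            have h1 : ∀ a, relmap ((τ1, M'.map fun p => (p.1 * τ1 u - (c * τ1 u * c⁻¹) * p.1, p.2))
                :: L'.map fun q => (q.1, q.2.map fun p =>
                  (p.1 * q.1 u - (c * τ1 u * c⁻¹) * p.1, p.2))) a = 0 := by
              intro a
              have := h0 a
              simp only [List.map_cons, relmap_cons, bmap_cons, hzero, zero_mul,
                zero_add] at this
              simpa using this
            have hres := ihk (M'.map fun p => (p.1 * τ1 u - (c * τ1 u * c⁻¹) * p.1, p.2)) τ1
              (L'.map fun q => (q.1, q.2.map fun p => (p.1 * q.1 u - (c * τ1 u * c⁻¹) * p.1, p.2)))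
              (by simpa using hM) (by simpa using hL')
              (by
                rw [List.map_cons, map_fst_map]
                simpa using hP) h1
            have hres2 := hres ⟨τN.1, τN.2.map fun p => (p.1 * τN.1 u - (c * τ1 u * c⁻¹) * p.1, p.2)⟩
              (List.mem_cons_of_mem _ (List.mem_map_of_mem
                (f := fun q => (q.1, q.2.map fun p => (p.1 * q.1 u - (c * τ1 u * c⁻¹) * p.1, p.2))) hτN)) y
            rw [bmap_elim_left] at hres2
            exact sub_eq_zero.mp hres2
          have hRe : ∀ u : Q, ∀ τN ∈ L', ∀ y : Q,
              bmap τN.2 (y * τN.1 u) = bmap τN.2 y * (d⁻¹ * τ1 u * d) := by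
            intro u τN hτN y
            have h0 : ∀ a, relmap ((((τ1, (c, d) :: M') :: L')).map fun q =>
                (q.1, q.2.map fun p => (p.1, q.1 u * p.2 - p.2 * (d⁻¹ * τ1 u * d)))) a = 0 := by
              intro a; rw [relmap_elim_right]; simp [hrel]
            have hzero : τ1 u * d - d * (d⁻¹ * τ1 u * d) = 0 := by
              rw [← mul_assoc d, ← mul_assoc d, mul_inv_cancel₀ hd, one_mul, sub_self]
            have h1 : ∀ a, relmap ((τ1, M'.map fun p => (p.1, τ1 u * p.2 - p.2 * (d⁻¹ * τ1 u * d)))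
                :: L'.map fun q => (q.1, q.2.map fun p =>
                  (p.1, q.1 u * p.2 - p.2 * (d⁻¹ * τ1 u * d)))) a = 0 := by
              intro a
              have := h0 a
              simp only [List.map_cons, relmap_cons, bmap_cons, hzero, mul_zero,
                zero_add] at this
              simpa using this
            have hres := ihk (M'.map fun p => (p.1, τ1 u * p.2 - p.2 * (d⁻¹ * τ1 u * d))) τ1
              (L'.map fun q => (q.1, q.2.map fun p => (p.1, q.1 u * p.2 - p.2 * (d⁻¹ * τ1 u * d))))
              (by simpa using hM) (by simpa using hL')
              (by
                rw [List.map_cons, map_fst_map]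
                simpa using hP) h1
            have hres2 := hres ⟨τN.1, τN.2.map fun p => (p.1, τN.1 u * p.2 - p.2 * (d⁻¹ * τ1 u * d))⟩
              (List.mem_cons_of_mem _ (List.mem_map_of_mem
                (f := fun q => (q.1, q.2.map fun p => (p.1, q.1 u * p.2 - p.2 * (d⁻¹ * τ1 u * d)))) hτN)) y
            rw [bmap_elim_right] at hres2
            exact sub_eq_zero.mp hres2
          have htail0 : ∀ τN ∈ L', ∀ y : Q, bmap τN.2 y = 0 := by
            rintro ⟨τ, N⟩ hτN
            have h1 : ∀ u, bmap N (τ u) = (c * τ1 u * c⁻¹) * bmap N 1 := fun u => by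
              simpa using hLe u (τ, N) hτN 1
            have h2 : ∀ u, bmap N (τ u) = bmap N 1 * (d⁻¹ * τ1 u * d) := fun u => by
              simpa using hRe u (τ, N) hτN 1
            by_cases he0 : bmap N 1 = 0
            · intro y
              have := h1 (τ.symm y)
              rw [RingEquiv.apply_symm_apply, he0, mul_zero] at this
              exact this
            · exfalso
              set e := bmap N 1 with hedef
              have hwd : (c⁻¹ * e * d⁻¹) * d = c⁻¹ * e := by
                rw [mul_assoc, inv_mul_cancel₀ hd, mul_one]
              have hecwd : c * ((c⁻¹ * e * d⁻¹) * d) = e := by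
                rw [hwd, ← mul_assoc, mul_inv_cancel₀ hc, one_mul]
              have hw0 : c⁻¹ * e * d⁻¹ ≠ 0 :=
                mul_ne_zero (mul_ne_zero (inv_ne_zero hc) he0) (inv_ne_zero hd)
              have hcw : ∀ u, τ1 u * (c⁻¹ * e * d⁻¹) = (c⁻¹ * e * d⁻¹) * τ1 u := by
                intro u
                have h3 : (c * τ1 u * c⁻¹) * e = e * (d⁻¹ * τ1 u * d) := (h1 u).symm.trans (h2 u)
                have h5 : c * ((τ1 u * (c⁻¹ * e * d⁻¹)) * d) = c * (((c⁻¹ * e * d⁻¹) * τ1 u) * d) := by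
                  calc c * ((τ1 u * (c⁻¹ * e * d⁻¹)) * d)
                      = ((c * τ1 u * c⁻¹) * e) * (d⁻¹ * d) := by noncomm_ring
                    _ = ((c * τ1 u * c⁻¹) * e) := by rw [inv_mul_cancel₀ hd, mul_one]
                    _ = e * (d⁻¹ * τ1 u * d) := h3
                    _ = (c * c⁻¹) * (e * (d⁻¹ * (τ1 u * d))) := by
                        rw [mul_inv_cancel₀ hc, one_mul]; noncomm_ring
                    _ = c * (((c⁻¹ * e * d⁻¹) * τ1 u) * d) := by noncomm_ring
                exact mul_right_cancel₀ hd (mul_left_cancel₀ hc h5)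
              set w := c⁻¹ * e * d⁻¹ with hwdef
              have hcw' : ∀ v, v * w = w * v := fun v => by
                have := hcw (τ1.symm v); rwa [RingEquiv.apply_symm_apply] at this
              set μ : Q ≃+* Q := τ.symm.trans τ1 with hμdef
              have hμap : ∀ v, μ v = τ1 (τ.symm v) := fun v => rfl
              have hNv : ∀ v, bmap N v = (c * w) * μ v * d := by
                intro v
                have h6 := h1 (τ.symm v)
                rw [RingEquiv.apply_symm_apply] at h6
                rw [h6, ← hμap, ← hecwd]
                calc c * τ1 (τ.symm v) * c⁻¹ * (c * (w * d))
                    = c * μ v * (c⁻¹ * c) * (w * d) := by rw [hμap]; noncomm_ring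
                  _ = c * (μ v * w) * d := by rw [inv_mul_cancel₀ hc, mul_one]; noncomm_ring
                  _ = c * (w * μ v) * d := by rw [hcw' (μ v)]
                  _ = c * w * μ v * d := by noncomm_ring
              have hμrep : ∀ v, μ v = bmap (N.map fun p => ((c * w)⁻¹ * p.1, p.2 * d⁻¹)) v := by
                intro v
                rw [bmap_conj, hNv v]
                rw [mul_assoc (c * w) (μ v) d, inv_mul_cancel_left₀ (mul_ne_zero hc hw0),
                  mul_inv_cancel_right₀ hd]
              obtain ⟨m, hm0, hminner⟩ := inner_of_bmap_eq μ _ _ le_rfl hμrep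
              have hPrel : NotInn τ1 τ := by
                have hp := hP
                rw [List.map_cons] at hp
                exact (List.pairwise_cons.mp hp).1 τ (List.mem_map.mpr ⟨(τ, N), hτN, rfl⟩)
              exact hPrel ⟨m, hm0, fun a => by
                have := hminner (τ a)
                rwa [hμap, RingEquiv.symm_apply_apply] at this⟩
          have hhead : ∀ y, bmap ((c, d) :: M') y = 0 := by
            intro y
            have h7 := hrel (τ1.symm y)
            rw [relmap_cons, RingEquiv.apply_symm_apply] at h7
            have h8 : relmap L' (τ1.symm y) = 0 := by
              apply List.sum_eq_zero
              intro z hz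
              obtain ⟨q, hq, rfl⟩ := List.mem_map.mp hz
              exact htail0 q hq _
            rw [h8, add_zero] at h7
            exact h7
          intro q hq
          rcases List.mem_cons.mp hq with rfl | hq
          · exact hhead
          · exact htail0 q hq
    intro L hL hP hrel q hq
    match L with
    | [] => simp at hq
    | (τ1, M) :: L' =>
      exact key M.length M τ1 L' le_rfl (by simpa using hL) hP hrel q hq


end AuxCenterFixed

/-- Let `Q` be a division ring and `G` a finite group acting on `Q` by ring automorphisms,
such that every non-identity element of `G` acts by a **non-inner** automorphism.  Then the
center of the division subring of invariants equals the `G`-invariants of the center: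
`Z(Q^G) = Z(Q) ∩ Q^G` (as subrings of `Q`, the left side being realized as the elements of
`Q^G` centralizing all of `Q^G`). -/
theorem center_fixedSubring_eq_of_outer
    {Q : Type*} [DivisionRing Q] {G : Type*} [Group G] [Finite G]
    (ρ : G →* RingAut Q)
    (houter : ∀ g : G, g ≠ 1 → ¬ ∃ q : Q, q ≠ 0 ∧ ∀ a : Q, ρ g a = q * a * q⁻¹) :
    Subring.centralizer ((fixedSubringOfAut ρ : Subring Q) : Set Q) ⊓ fixedSubringOfAut ρ =
      Subring.center Q ⊓ fixedSubringOfAut ρ := by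
  classical
  haveI : Fintype G := Fintype.ofFinite G
  apply le_antisymm
  · intro x hx
    obtain ⟨hx1, hx2⟩ := Subring.mem_inf.mp hx
    refine Subring.mem_inf.mpr ⟨?_, hx2⟩
    rw [Subring.mem_center_iff]
    intro b
    have hfix : ∀ g : G, ρ g x = x := hx2
    have htr : ∀ a : Q, (∑ g : G, ρ g a) * x = x * ∑ g : G, ρ g a := by
      intro a
      refine Subring.mem_centralizer_iff.mp hx1 _ ?_
      show (∑ g : G, ρ g a) ∈ fixedSubringOfAut ρ
      intro h
      rw [map_sum]
      have hcomp : ∀ g : G, ρ h (ρ g a) = ρ (h * g) a := fun g => by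
        rw [map_mul]; rfl
      calc (∑ g : G, ρ h (ρ g a)) = ∑ g : G, ρ (h * g) a := by
            exact Finset.sum_congr rfl fun g _ => hcomp g
        _ = ∑ g : G, ρ g a := Equiv.sum_comp (Equiv.mulLeft h) (fun g => ρ g a)
    have hrel0 : ∀ a : Q, ∑ g : G, (x * ρ g a - ρ g a * x) = 0 := by
      intro a
      rw [Finset.sum_sub_distrib, ← Finset.mul_sum, ← Finset.sum_mul, htr a, sub_self]
    set L : List ((Q ≃+* Q) × List (Q × Q)) :=
      (Finset.univ : Finset G).toList.map (fun g => ((ρ g : Q ≃+* Q), [(x, 1), (1, -x)]))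
      with hLdef
    have hPair : (L.map Prod.fst).Pairwise NotInn := by
      rw [hLdef, List.map_map]
      have hnd : (Finset.univ : Finset G).toList.Pairwise (· ≠ ·) := Finset.nodup_toList _
      refine hnd.map _ ?_
      intro g h hgh hinn
      obtain ⟨m, hm0, hmeq'⟩ := hinn
      have hmeq : ∀ a : Q, ρ g a = m * ρ h a * m⁻¹ := hmeq'
      refine houter (g * h⁻¹) (by
        intro hcon
        exact hgh (by rw [← mul_one g, ← inv_mul_cancel h, ← mul_assoc, hcon, one_mul]))
        ⟨m, hm0, fun a => ?_⟩
      have e1 : ρ (g * h⁻¹) a = ρ g (ρ h⁻¹ a) := by rw [map_mul]; rfl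
      have e2 : ρ h (ρ h⁻¹ a) = a := by
        have : ρ h (ρ h⁻¹ a) = ρ (h * h⁻¹) a := by rw [map_mul]; rfl
        rw [this, mul_inv_cancel, map_one]; rfl
      rw [e1, hmeq (ρ h⁻¹ a), e2]
    have hrelL : ∀ a, relmap L a = 0 := by
      intro a
      rw [hLdef]
      unfold relmap
      rw [List.map_map]
      have hterm : ∀ g : G,
          ((fun q : (Q ≃+* Q) × List (Q × Q) => bmap q.2 (q.1 a)) ∘
            (fun g : G => ((ρ g : Q ≃+* Q), [(x, 1), (1, -x)]))) g
          = x * ρ g a - ρ g a * x := by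
        intro g
        show bmap [(x, 1), (1, -x)] (ρ g a) = _
        simp [bmap]
        noncomm_ring
      rw [List.map_congr_left (fun g _ => hterm g), Finset.sum_map_toList]
      exact hrel0 a
    have hmem : ((ρ (1 : G) : Q ≃+* Q), [(x, 1), (1, -x)]) ∈ L :=
      List.mem_map_of_mem (Finset.mem_toList.mpr (Finset.mem_univ 1))
    have hfin := indep_main L.length L le_rfl hPair hrelL _ hmem b
    have : x * b - b * x = 0 := by
      have := hfin
      simp only [bmap, List.map_cons, List.map_nil, List.sum_cons, List.sum_nil,
        mul_one, one_mul, add_zero, mul_neg] at this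
      rw [sub_eq_add_neg]
      exact this
    have := sub_eq_zero.mp this
    exact this.symm
  · intro z hz
    obtain ⟨hz1, hz2⟩ := Subring.mem_inf.mp hz
    refine Subring.mem_inf.mpr ⟨Subring.mem_centralizer_iff.mpr fun y _ => ?_, hz2⟩
    exact Subring.mem_center_iff.mp hz1 y
end
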